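/- Let a < b be real numbers, let g : ℝ → ℝ be continuous on [a,b], and let t ∈ (a,b]. Then the Riemann–Liouville fractional integral J^β_a g(t) = (1/Γ(β)) ∫_a^t (t-s)^{β-1} g(s) ds converges to g(t) as β → 0 from the right. -/

import Mathlib

open MeasureTheory intervalIntegral Filter Set

/-- The Riemann–Liouville fractional integral of order `β` with starting point `a`:
`J^β_a g(t) = (1/Γ(β)) ∫_a^t (t-s)^(β-1) g(s) ds`. -/
noncomputable def rlIntegral (a β : ℝ) (g : ℝ → ℝ) (t : ℝ) : ℝ :=
  (Real.Gamma β)⁻¹ * ∫ s in a..t, (t - s) ^ (β - 1) * g s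

lemma rl_base_integrable (t a : ℝ) {β : ℝ} (hβ : 0 < β) :
    IntervalIntegrable (fun s => (t - s) ^ (β - 1)) volume a t := by
  have h := (intervalIntegral.intervalIntegrable_rpow' (a := t - a) (b := t - t)
    (show (-1 : ℝ) < β - 1 by linarith)).comp_sub_left t
  have e1 : t - (t - a) = a := by ring
  have e2 : t - (t - t) = t := by ring
  rwa [e1, e2] at h

lemma rl_integral_eval (t : ℝ) {β : ℝ} (hβ : 0 < β) (c : ℝ) :
    ∫ s in c..t, (t - s) ^ (β - 1) = (t - c) ^ β / β := by
  rw [intervalIntegral.integral_comp_sub_left (fun x => x ^ (β - 1)) t, sub_self,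
    integral_rpow (Or.inl (by linarith))]
  rw [sub_add_cancel, Real.zero_rpow hβ.ne', sub_zero]

lemma gamma_add_one_tendsto :
    Filter.Tendsto (fun β : ℝ => Real.Gamma (β + 1)) (nhds 0) (nhds 1) := by
  have h1 : ContinuousAt Real.Gamma 1 := by
    refine (Real.differentiableAt_Gamma fun m => ?_).continuousAt
    have : (0:ℝ) ≤ m := Nat.cast_nonneg m
    intro h; linarith
  have h2 : Filter.Tendsto (fun β : ℝ => β + 1) (nhds 0) (nhds 1) := by
    have := (continuous_add_right (1:ℝ)).tendsto (0 : ℝ); rwa [zero_add] at this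
  have := h1.tendsto.comp h2
  rwa [Real.Gamma_one] at this

lemma gamma_inv_tendsto :
    Filter.Tendsto (fun β : ℝ => (Real.Gamma β)⁻¹) (nhdsWithin 0 (Set.Ioi 0)) (nhds 0) := by
  have heq : ∀ β ∈ Set.Ioi (0 : ℝ), β / Real.Gamma (β + 1) = (Real.Gamma β)⁻¹ := by
    intro β hβ
    have hβ : (0 : ℝ) < β := hβ
    have hΓ : 0 < Real.Gamma β := Real.Gamma_pos_of_pos hβ
    rw [Real.Gamma_add_one hβ.ne']
    field_simp
  refine Filter.Tendsto.congr' (eventually_mem_nhdsWithin.mono heq) ?_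
  have hid : Filter.Tendsto (fun β : ℝ => β) (nhdsWithin 0 (Set.Ioi 0)) (nhds 0) :=
    (continuous_id.tendsto 0).mono_left nhdsWithin_le_nhds
  have hg : Filter.Tendsto (fun β : ℝ => Real.Gamma (β + 1)) (nhdsWithin 0 (Set.Ioi 0))
      (nhds 1) := gamma_add_one_tendsto.mono_left nhdsWithin_le_nhds
  have := hid.div hg one_ne_zero; rwa [zero_div] at this

theorem rlIntegral_tendsto_self (a b : ℝ) (hab : a < b) (g : ℝ → ℝ)
    (hg : ContinuousOn g (Set.Icc a b)) (t : ℝ) (ht : t ∈ Set.Ioc a b) :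
    Filter.Tendsto (fun β => rlIntegral a β g t)
      (nhdsWithin 0 (Set.Ioi 0)) (nhds (g t)) := by
  obtain ⟨hat, htb⟩ := ht
  have htmem : t ∈ Set.Icc a b := ⟨hat.le, htb⟩
  have hta : 0 < t - a := sub_pos.2 hat
  obtain ⟨M, hM⟩ := isCompact_Icc.exists_bound_of_continuousOn hg
  have hM0 : 0 ≤ M := (norm_nonneg _).trans (hM t htmem)
  have hsub : Set.Icc a t ⊆ Set.Icc a b := Set.Icc_subset_Icc le_rfl htb
  -- integrability of the difference integrand on [a, t]
  have hintD : ∀ {β : ℝ}, 0 < β →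
      IntervalIntegrable (fun s => (t - s) ^ (β - 1) * (g s - g t)) volume a t := by
    intro β hβ
    refine (rl_base_integrable t a hβ).mul_continuousOn ?_
    rw [Set.uIcc_of_le hat.le]
    exact ((hg.mono hsub).sub continuousOn_const)
  -- decomposition
  have key : ∀ β ∈ Set.Ioi (0 : ℝ), rlIntegral a β g t =
      (Real.Gamma β)⁻¹ * (∫ s in a..t, (t - s) ^ (β - 1) * (g s - g t)) +
        g t * ((t - a) ^ β / Real.Gamma (β + 1)) := by
    intro β hβ
    have hβ : (0 : ℝ) < β := hβ
    have hΓ : 0 < Real.Gamma β := Real.Gamma_pos_of_pos hβ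
    have hsplit : (∫ s in a..t, (t - s) ^ (β - 1) * g s) =
        (∫ s in a..t, (t - s) ^ (β - 1) * (g s - g t)) + g t * ((t - a) ^ β / β) := by
      have e : (∫ s in a..t, (t - s) ^ (β - 1) * g s) =
          ∫ s in a..t, ((t - s) ^ (β - 1) * (g s - g t) + (t - s) ^ (β - 1) * g t) := by
        congr 1; ext s; ring
      rw [e, intervalIntegral.integral_add (hintD hβ)
        ((rl_base_integrable t a hβ).mul_const _),
        intervalIntegral.integral_mul_const, rl_integral_eval t hβ a]
      ring
    rw [rlIntegral, hsplit, Real.Gamma_add_one hβ.ne']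
    field_simp
  have hΓ1 : Filter.Tendsto (fun β : ℝ => Real.Gamma (β + 1)) (nhdsWithin 0 (Set.Ioi 0))
      (nhds 1) := gamma_add_one_tendsto.mono_left nhdsWithin_le_nhds
  -- the second piece tends to g t
  have hG : Filter.Tendsto (fun β : ℝ => g t * ((t - a) ^ β / Real.Gamma (β + 1)))
      (nhdsWithin 0 (Set.Ioi 0)) (nhds (g t)) := by
    have hpow : Filter.Tendsto (fun β : ℝ => (t - a) ^ β) (nhdsWithin 0 (Set.Ioi 0))
        (nhds 1) := by
      have := (Real.continuousAt_const_rpow (a := t - a) (b := 0) hta.ne').tendsto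
      rw [Real.rpow_zero] at this
      exact this.mono_left nhdsWithin_le_nhds
    have := (tendsto_const_nhds (x := g t)).mul (hpow.div hΓ1 one_ne_zero)
    simpa using this
  -- the first piece tends to 0
  have hE : Filter.Tendsto
      (fun β : ℝ => (Real.Gamma β)⁻¹ * ∫ s in a..t, (t - s) ^ (β - 1) * (g s - g t))
      (nhdsWithin 0 (Set.Ioi 0)) (nhds 0) := by
    rw [NormedAddCommGroup.tendsto_nhds_zero]
    intro ε hε
    obtain ⟨δ₀, hδ₀, hδg⟩ := Metric.continuousWithinAt_iff.1 (hg t htmem) (ε / 4)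
      (by positivity)
    set δ : ℝ := min (δ₀ / 2) (t - a) with hδdef
    have hδpos : 0 < δ := lt_min (by positivity) hta
    have hδle : δ ≤ t - a := min_le_right _ _
    have hδ0' : δ < δ₀ := lt_of_le_of_lt (min_le_left _ _) (by linarith)
    have htδa : a ≤ t - δ := by linarith
    have htδt : t - δ ≤ t := by linarith
    -- bound function
    set B : ℝ → ℝ := fun β => (Real.Gamma β)⁻¹ * (δ ^ (β - 1) * (2 * M) * (t - a)) +
      ε / 4 * (δ ^ β / Real.Gamma (β + 1)) with hBdef
    have hBtendsto : Filter.Tendsto B (nhdsWithin 0 (Set.Ioi 0)) (nhds (ε / 4)) := by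
      have hpow1 : Filter.Tendsto (fun β : ℝ => δ ^ (β - 1)) (nhdsWithin 0 (Set.Ioi 0))
          (nhds (δ ^ ((0:ℝ) - 1))) := by
        have h1 := (Real.continuousAt_const_rpow (a := δ) (b := (0:ℝ) - 1) hδpos.ne').tendsto
        have h2 : Filter.Tendsto (fun β : ℝ => β - 1) (nhds 0) (nhds ((0:ℝ) - 1)) :=
          (continuous_id.sub continuous_const).tendsto (0 : ℝ)
        exact (h1.comp h2).mono_left nhdsWithin_le_nhds
      have hpow2 : Filter.Tendsto (fun β : ℝ => δ ^ β) (nhdsWithin 0 (Set.Ioi 0))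
          (nhds 1) := by
        have := (Real.continuousAt_const_rpow (a := δ) (b := 0) hδpos.ne').tendsto
        rw [Real.rpow_zero] at this
        exact this.mono_left nhdsWithin_le_nhds
      have h1 : Filter.Tendsto
          (fun β : ℝ => (Real.Gamma β)⁻¹ * (δ ^ (β - 1) * (2 * M) * (t - a)) +
            ε / 4 * (δ ^ β / Real.Gamma (β + 1))) (nhdsWithin 0 (Set.Ioi 0))
          (nhds (0 * (δ ^ ((0:ℝ) - 1) * (2 * M) * (t - a)) + ε / 4 * (1 / 1))) :=
        (gamma_inv_tendsto.mul ((hpow1.mul tendsto_const_nhds).mul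
          tendsto_const_nhds)).add (tendsto_const_nhds.mul (hpow2.div hΓ1 one_ne_zero))
      rw [hBdef]
      simpa using h1
    have hBev : ∀ᶠ β in nhdsWithin 0 (Set.Ioi 0), B β < ε :=
      hBtendsto.eventually_lt_const (by linarith)
    have hmem : Set.Ioo (0 : ℝ) 1 ∈ nhdsWithin 0 (Set.Ioi 0) :=
      Ioo_mem_nhdsGT_of_mem ⟨le_refl 0, zero_lt_one⟩
    filter_upwards [hBev, hmem] with β hBβ hβmem
    obtain ⟨hβ, hβ1⟩ := hβmem
    have hΓ : 0 < Real.Gamma β := Real.Gamma_pos_of_pos hβ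
    -- split the integral
    have hss1 : Set.uIcc a (t - δ) ⊆ Set.uIcc a t := by
      rw [Set.uIcc_of_le hat.le, Set.uIcc_of_le htδa]
      exact Set.Icc_subset_Icc le_rfl htδt
    have hss2 : Set.uIcc (t - δ) t ⊆ Set.uIcc a t := by
      rw [Set.uIcc_of_le hat.le, Set.uIcc_of_le htδt]
      exact Set.Icc_subset_Icc htδa le_rfl
    have hI1 : IntervalIntegrable (fun s => (t - s) ^ (β - 1) * (g s - g t)) volume a (t - δ) :=
      (hintD hβ).mono_set hss1
    have hI2 : IntervalIntegrable (fun s => (t - s) ^ (β - 1) * (g s - g t)) volume (t - δ) t :=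
      (hintD hβ).mono_set hss2
    have hsplitI : (∫ s in a..t, (t - s) ^ (β - 1) * (g s - g t)) =
        (∫ s in a..(t - δ), (t - s) ^ (β - 1) * (g s - g t)) +
          ∫ s in (t - δ)..t, (t - s) ^ (β - 1) * (g s - g t) :=
      (intervalIntegral.integral_add_adjacent_intervals hI1 hI2).symm
    -- bound the far part
    have hbound1 : ‖∫ s in a..(t - δ), (t - s) ^ (β - 1) * (g s - g t)‖ ≤
        δ ^ (β - 1) * (2 * M) * (t - a) := by
      have h := intervalIntegral.norm_integral_le_of_norm_le_const
        (a := a) (b := t - δ) (C := δ ^ (β - 1) * (2 * M))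
        (f := fun s => (t - s) ^ (β - 1) * (g s - g t)) ?_
      · refine h.trans ?_
        have : |t - δ - a| = t - δ - a := abs_of_nonneg (by linarith)
        rw [this]
        have h1 : (0:ℝ) ≤ δ ^ (β - 1) * (2 * M) := by positivity
        nlinarith [Real.rpow_nonneg hδpos.le (β - 1)]
      · intro s hs
        rw [Set.uIoc_of_le htδa] at hs
        obtain ⟨hs1, hs2⟩ := hs
        have hts : δ ≤ t - s := by linarith
        have h1 : (t - s) ^ (β - 1) ≤ δ ^ (β - 1) :=
          Real.rpow_le_rpow_of_nonpos hδpos hts (by linarith)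
        have h2 : |g s - g t| ≤ 2 * M := by
          have hsm : s ∈ Set.Icc a b := ⟨hs1.le, by linarith⟩
          calc |g s - g t| ≤ |g s| + |g t| := abs_sub _ _
            _ ≤ M + M := add_le_add (hM s hsm) (hM t htmem)
            _ = 2 * M := by ring
        rw [norm_mul]
        have h3 : ‖(t - s) ^ (β - 1)‖ = (t - s) ^ (β - 1) :=
          abs_of_nonneg (Real.rpow_nonneg (by linarith) _)
        rw [h3]
        exact mul_le_mul h1 h2 (abs_nonneg _) (Real.rpow_nonneg hδpos.le _)
    -- bound the near part
    have hbound2 : ‖∫ s in (t - δ)..t, (t - s) ^ (β - 1) * (g s - g t)‖ ≤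
        ε / 4 * (δ ^ β / β) := by
      have hbint : IntervalIntegrable (fun s => (t - s) ^ (β - 1) * (ε / 4)) volume (t - δ) t :=
        ((rl_base_integrable t a hβ).mono_set hss2).mul_const _
      have h := intervalIntegral.norm_integral_le_abs_of_norm_le (μ := volume)
        (a := t - δ) (b := t)
        (f := fun s => (t - s) ^ (β - 1) * (g s - g t))
        (g := fun s => (t - s) ^ (β - 1) * (ε / 4)) ?_ hbint
      · have heval : (∫ s in (t - δ)..t, (t - s) ^ (β - 1) * (ε / 4)) =
            ε / 4 * (δ ^ β / β) := by
          rw [intervalIntegral.integral_mul_const, rl_integral_eval t hβ (t - δ)]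
          ring_nf
        rw [heval] at h
        refine h.trans (le_of_eq (abs_of_nonneg (by positivity)))
      · refine ((ae_restrict_mem measurableSet_uIoc).mono fun s hs => ?_)
        rw [Set.uIoc_of_le htδt] at hs
        obtain ⟨hs1, hs2⟩ := hs
        have hsm : s ∈ Set.Icc a b := ⟨by linarith, by linarith⟩
        have hdist : dist s t < δ₀ := by
          rw [Real.dist_eq, abs_of_nonpos (by linarith)]
          have : t - s < δ := by linarith
          linarith
        have h2 : |g s - g t| ≤ ε / 4 := le_of_lt (by
          have := hδg hsm hdist
          rwa [Real.dist_eq] at this)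
        rw [norm_mul]
        have h3 : ‖(t - s) ^ (β - 1)‖ = (t - s) ^ (β - 1) :=
          abs_of_nonneg (Real.rpow_nonneg (by linarith) _)
        rw [h3]
        exact mul_le_mul_of_nonneg_left h2 (Real.rpow_nonneg (by linarith) _)
    -- combine
    have hfinal : ‖(Real.Gamma β)⁻¹ * ∫ s in a..t, (t - s) ^ (β - 1) * (g s - g t)‖ ≤ B β := by
      rw [norm_mul, hsplitI]
      have hΓinv : ‖(Real.Gamma β)⁻¹‖ = (Real.Gamma β)⁻¹ :=
        abs_of_nonneg (by positivity)
      rw [hΓinv]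
      have htri := norm_add_le (∫ s in a..(t - δ), (t - s) ^ (β - 1) * (g s - g t))
        (∫ s in (t - δ)..t, (t - s) ^ (β - 1) * (g s - g t))
      have hstep : (Real.Gamma β)⁻¹ *
          ‖(∫ s in a..(t - δ), (t - s) ^ (β - 1) * (g s - g t)) +
            ∫ s in (t - δ)..t, (t - s) ^ (β - 1) * (g s - g t)‖ ≤
          (Real.Gamma β)⁻¹ * (δ ^ (β - 1) * (2 * M) * (t - a) + ε / 4 * (δ ^ β / β)) := by
        refine mul_le_mul_of_nonneg_left ?_ (by positivity)
        exact htri.trans (add_le_add hbound1 hbound2)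
      refine hstep.trans (le_of_eq ?_)
      rw [hBdef]
      have hΓβ1 : Real.Gamma (β + 1) = β * Real.Gamma β := Real.Gamma_add_one hβ.ne'
      simp only [hΓβ1]
      field_simp [hΓβ1]
    exact lt_of_le_of_lt hfinal hBβ
  -- put the pieces together
  have hsum := hE.add hG
  rw [zero_add] at hsum
  exact Filter.Tendsto.congr'
    (eventually_mem_nhdsWithin.mono fun β hβ => (key β hβ).symm) hsum
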